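/- Let R be a discrete valuation ring with fraction field L, let n ≥ 1 and q ≥ 1, and let g, s ∈ GL_n(L) satisfy g·s·g⁻¹ = s^q. Suppose that g and s, regarded as elements of the matrix algebra Mₙ(L), are integral over R (for instance, their characteristic polynomials split over L with all roots lying in R). Then there exists h ∈ GL_n(L) such that every entry of h·g·h⁻¹ and every entry of h·s·h⁻¹ lies in (the image of) R. -/

import Mathlib

open Matrix

/-- Auxiliary: all powers of an integral element lie in the `R`-span of finitely many powers. -/
private lemma pow_mem_span_aux {R A : Type*} [CommRing R] [Ring A] [Algebra R A]
    {x : A} (hx : IsIntegral R x) :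
    ∃ d : ℕ, ∀ k : ℕ, x ^ k ∈ Submodule.span R ((fun i : ℕ => x ^ i) '' Set.Iio d) := by
  classical
  obtain ⟨p, hpm, hp0⟩ := hx
  refine ⟨p.natDegree, fun k => ?_⟩
  have hfx : Polynomial.aeval x p = 0 := by rwa [Polynomial.aeval_def]
  have h := Submodule.span_range_natDegree_eq_adjoin hpm hfx
  have h2 : ((Finset.image (fun i : ℕ => x ^ i) (Finset.range p.natDegree) : Finset A) : Set A)
      = (fun i : ℕ => x ^ i) '' Set.Iio p.natDegree := by
    rw [Finset.coe_image, Finset.coe_range]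
  rw [← h2, h, Subalgebra.mem_toSubmodule]
  exact Subalgebra.pow_mem (Algebra.adjoin R {x}) (Algebra.subset_adjoin rfl) k

/-- Auxiliary linear map `M ↦ (A * M * B) *ᵥ v`. -/
private def sandwichVec {L : Type*} [CommRing L] {n : ℕ} (A B : Matrix (Fin n) (Fin n) L)
    (v : Fin n → L) : Matrix (Fin n) (Fin n) L →ₗ[L] (Fin n → L) where
  toFun M := (A * M * B) *ᵥ v
  map_add' M N := by simp [Matrix.mul_add, Matrix.add_mul, Matrix.add_mulVec]
  map_smul' c M := by simp [Matrix.mul_smul, Matrix.smul_mul, Matrix.smul_mulVec]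

private lemma sandwichVec_apply {L : Type*} [CommRing L] {n : ℕ}
    (A B M : Matrix (Fin n) (Fin n) L) (v : Fin n → L) :
    sandwichVec A B v M = (A * M * B) *ᵥ v := rfl

/-- Let `R` be a DVR with fraction field `L`, and let `g, s ∈ GL_n(L)` satisfy
`g s g⁻¹ = s^q`.  If `g` and `s` are integral over `R` (as elements of the matrix algebra
`Mₙ(L)`), then there exists `h ∈ GL_n(L)` simultaneously conjugating `g` and `s` into
matrices all of whose entries lie in (the image of) `R`. -/
theorem statement_3 (R : Type) [CommRing R] [IsDomain R] [IsDiscreteValuationRing R]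
    (L : Type) [Field L] [Algebra R L] [IsFractionRing R L]
    (n q : ℕ) (hn : 1 ≤ n) (hq : 1 ≤ q)
    (g s : GL (Fin n) L)
    (hrel : g * s * g⁻¹ = s ^ q)
    (hg : IsIntegral R (g : Matrix (Fin n) (Fin n) L))
    (hs : IsIntegral R (s : Matrix (Fin n) (Fin n) L)) :
    ∃ h : GL (Fin n) L,
      (∀ i j : Fin n,
        ((h : Matrix (Fin n) (Fin n) L) * g * ((h⁻¹ : GL (Fin n) L) : Matrix (Fin n) (Fin n) L)) i j
          ∈ (algebraMap R L).range) ∧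
      (∀ i j : Fin n,
        ((h : Matrix (Fin n) (Fin n) L) * s * ((h⁻¹ : GL (Fin n) L) : Matrix (Fin n) (Fin n) L)) i j
          ∈ (algebraMap R L).range) := by
  classical
  set G : Matrix (Fin n) (Fin n) L := (g : Matrix (Fin n) (Fin n) L) with hGdef
  set S : Matrix (Fin n) (Fin n) L := (s : Matrix (Fin n) (Fin n) L) with hSdef
  -- the commutation relation at the group level
  have hgs : ∀ a : ℕ, g * s ^ a = s ^ (q * a) * g := by
    intro a
    have h1 := map_pow (MulAut.conj g) s a
    simp only [MulAut.conj_apply] at h1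
    rw [hrel, ← pow_mul] at h1
    exact mul_inv_eq_iff_eq_mul.mp h1
  -- the commutation relation at the matrix level
  have hGS : ∀ a : ℕ, G * S ^ a = S ^ (q * a) * G := by
    intro a
    have h1 := congrArg Units.val (hgs a)
    simpa only [Units.val_mul, Units.val_pow_eq_pow_val, ← hGdef, ← hSdef] using h1
  obtain ⟨dg, hdg⟩ := pow_mem_span_aux (R := R) hg
  obtain ⟨ds, hds⟩ := pow_mem_span_aux (R := R) hs
  -- the lattice
  set e : Fin n → (Fin n → L) := fun i => Pi.single i 1 with hedef
  set T : Set (Fin n → L) :=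
    {w | ∃ a b : ℕ, ∃ i : Fin n, w = (S ^ a * G ^ b) *ᵥ e i} with hTdef
  set F : Set (Fin n → L) :=
    Set.range (fun t : Fin ds × Fin dg × Fin n =>
      (S ^ (t.1 : ℕ) * G ^ ((t.2.1 : ℕ))) *ᵥ e t.2.2) with hFdef
  have key : ∀ (a b : ℕ) (i : Fin n), (S ^ a * G ^ b) *ᵥ e i ∈ Submodule.span R F := by
    intro a b i
    have h1 : (S ^ a * G ^ b) *ᵥ e i ∈
        Submodule.span R
          ((⇑((sandwichVec (1 : Matrix (Fin n) (Fin n) L) (G ^ b) (e i)).restrictScalars R)) ''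
            ((fun i : ℕ => S ^ i) '' Set.Iio ds)) := by
      have := Submodule.apply_mem_span_image_of_mem_span
        ((sandwichVec (1 : Matrix (Fin n) (Fin n) L) (G ^ b) (e i)).restrictScalars R) (hds a)
      simpa only [LinearMap.coe_restrictScalars, sandwichVec_apply, Matrix.one_mul] using this
    refine Submodule.span_le.mpr ?_ h1
    rintro w ⟨M, ⟨α, hα, rfl⟩, rfl⟩
    have h3 := Submodule.apply_mem_span_image_of_mem_span
      ((sandwichVec (S ^ α) (1 : Matrix (Fin n) (Fin n) L) (e i)).restrictScalars R) (hdg b)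
    have hsub : (⇑((sandwichVec (S ^ α) (1 : Matrix (Fin n) (Fin n) L) (e i)).restrictScalars R)) ''
        ((fun i : ℕ => G ^ i) '' Set.Iio dg) ⊆ F := by
      rintro w ⟨M, ⟨β, hβ, rfl⟩, rfl⟩
      exact ⟨(⟨α, hα⟩, ⟨β, hβ⟩, i), by
        simp only [LinearMap.coe_restrictScalars, sandwichVec_apply, Matrix.mul_one]⟩
    have h4 := Submodule.span_mono hsub h3
    simpa only [LinearMap.coe_restrictScalars, sandwichVec_apply, Matrix.one_mul,
      Matrix.mul_one, SetLike.mem_coe] using h4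
  have hFT : F ⊆ T := by
    rintro w ⟨⟨α, β, i⟩, rfl⟩
    exact ⟨(α : ℕ), (β : ℕ), i, rfl⟩
  have hΛF : Submodule.span R T = Submodule.span R F := by
    refine le_antisymm (Submodule.span_le.mpr ?_) (Submodule.span_mono hFT)
    rintro w ⟨a, b, i, rfl⟩
    exact key a b i
  have hfg : (Submodule.span R T).FG := by
    rw [hΛF]; exact Submodule.fg_span (Set.finite_range _)
  -- stability under G and S
  have hstabG : ∀ w ∈ Submodule.span R T, G *ᵥ w ∈ Submodule.span R T := by
    intro w hw
    have h1 := Submodule.apply_mem_span_image_of_mem_span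
      ((Matrix.mulVecLin G).restrictScalars R) hw
    refine Submodule.span_le.mpr ?_ h1
    rintro u ⟨x, ⟨a, b, i, rfl⟩, rfl⟩
    have hmul : G * (S ^ a * G ^ b) = S ^ (q * a) * G ^ (b + 1) := by
      rw [← Matrix.mul_assoc, hGS a, Matrix.mul_assoc, ← pow_succ']
    have : ((Matrix.mulVecLin G).restrictScalars R) ((S ^ a * G ^ b) *ᵥ e i)
        = (S ^ (q * a) * G ^ (b + 1)) *ᵥ e i := by
      simp only [LinearMap.coe_restrictScalars, Matrix.mulVecLin_apply, Matrix.mulVec_mulVec,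
        hmul]
    rw [this]
    exact Submodule.subset_span ⟨q * a, b + 1, i, rfl⟩
  have hstabS : ∀ w ∈ Submodule.span R T, S *ᵥ w ∈ Submodule.span R T := by
    intro w hw
    have h1 := Submodule.apply_mem_span_image_of_mem_span
      ((Matrix.mulVecLin S).restrictScalars R) hw
    refine Submodule.span_le.mpr ?_ h1
    rintro u ⟨x, ⟨a, b, i, rfl⟩, rfl⟩
    have hmul : S * (S ^ a * G ^ b) = S ^ (a + 1) * G ^ b := by
      rw [← Matrix.mul_assoc, ← pow_succ']
    have : ((Matrix.mulVecLin S).restrictScalars R) ((S ^ a * G ^ b) *ᵥ e i)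
        = (S ^ (a + 1) * G ^ b) *ᵥ e i := by
      simp only [LinearMap.coe_restrictScalars, Matrix.mulVecLin_apply, Matrix.mulVec_mulVec,
        hmul]
    rw [this]
    exact Submodule.subset_span ⟨a + 1, b, i, rfl⟩
  -- module theory over the DVR
  haveI : Module.IsTorsionFree R L :=
    inferInstance
  set Λ : Submodule R (Fin n → L) := Submodule.span R T with hΛdef
  haveI : Module.Finite R ↥Λ := Module.Finite.iff_fg.mpr hfg
  haveI : Module.Free R ↥Λ := Module.free_of_finite_type_torsion_free'
  set ι := Module.Free.ChooseBasisIndex R ↥Λ with hιdef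
  set b : Module.Basis ι R ↥Λ := Module.Free.chooseBasis R ↥Λ with hbdef
  set v : ι → (Fin n → L) := fun k => ((b k : ↥Λ) : Fin n → L) with hvdef
  have hvR : LinearIndependent R v :=
    b.linearIndependent.map' Λ.subtype (Submodule.ker_subtype Λ)
  have hvL : LinearIndependent L v := (LinearIndependent.iff_fractionRing R L).mp hvR
  have hspanR : Submodule.span R (Set.range v) = Λ := by
    have : Set.range v = Λ.subtype '' Set.range b := by
      rw [← Set.range_comp]; rfl
    rw [this, Submodule.span_image, b.span_eq, Submodule.map_subtype_top]
  have heΛ : ∀ i : Fin n, e i ∈ Λ := by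
    intro i
    refine Submodule.subset_span ⟨0, 0, i, ?_⟩
    simp
  have hspanL : ⊤ ≤ Submodule.span L (Set.range v) := by
    rw [← (Pi.basisFun L (Fin n)).span_eq]
    refine Submodule.span_le.mpr ?_
    rintro w ⟨i, rfl⟩
    have h1 : Pi.basisFun L (Fin n) i ∈ Λ := by
      rw [Pi.basisFun_apply]
      exact heΛ i
    rw [← hspanR] at h1
    exact Submodule.span_le_restrictScalars R L (Set.range v) h1
  set Bv : Module.Basis ι L (Fin n → L) := Module.Basis.mk hvL hspanL with hBvdef
  haveI : Fintype ι := Module.Free.ChooseBasisIndex.fintype R ↥Λ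
  have hcard : Fintype.card ι = n := by
    have h1 := Module.finrank_eq_card_basis Bv
    rw [Module.finrank_fin_fun] at h1
    exact h1.symm
  set eqv : ι ≃ Fin n := Fintype.equivFinOfCardEq hcard with heqvdef
  set B : Module.Basis (Fin n) L (Fin n → L) := Bv.reindex eqv with hBdef
  have hBmem : ∀ j : Fin n, B j ∈ Λ := by
    intro j
    rw [hBdef, Module.Basis.reindex_apply, hBvdef, Module.Basis.mk_apply]
    exact (b (eqv.symm j)).2
  have hBspan : Submodule.span R (Set.range B) = Λ := by
    rw [hBdef, Module.Basis.range_reindex, hBvdef]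
    have : Set.range ⇑Bv = Set.range v := by rw [hBvdef, Module.Basis.coe_mk]
    rw [hBvdef] at this
    rw [this, hspanR]
  set P : Matrix (Fin n) (Fin n) L := (Pi.basisFun L (Fin n)).toMatrix B with hPdef
  set Q : Matrix (Fin n) (Fin n) L := B.toMatrix (Pi.basisFun L (Fin n)) with hQdef
  have hQP : Q * P = 1 := Module.Basis.toMatrix_mul_toMatrix_flip _ _
  have hPQ : P * Q = 1 := Module.Basis.toMatrix_mul_toMatrix_flip _ _
  have hmat : ∀ M : Matrix (Fin n) (Fin n) L,
      Q * M * P = LinearMap.toMatrix B B (Matrix.toLin' M) := by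
    intro M
    have h0 : LinearMap.toMatrix (Pi.basisFun L (Fin n)) (Pi.basisFun L (Fin n))
        (Matrix.toLin' M) = M := by
      rw [LinearMap.toMatrix_eq_toMatrix', LinearMap.toMatrix'_toLin']
    conv_lhs => rw [← h0]
    rw [basis_toMatrix_mul_linearMap_toMatrix_mul_basis_toMatrix]
  have hentry : ∀ M : Matrix (Fin n) (Fin n) L,
      (∀ w ∈ Λ, M *ᵥ w ∈ Λ) → ∀ i j, (Q * M * P) i j ∈ (algebraMap R L).range := by
    intro M hM i j
    rw [hmat M, LinearMap.toMatrix_apply]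
    have h1 : Matrix.toLin' M (B j) ∈ Submodule.span R (Set.range B) := by
      rw [hBspan, Matrix.toLin'_apply]
      exact hM _ (hBmem j)
    obtain ⟨r, hr⟩ := (B.mem_span_iff_repr_mem R _).mp h1 i
    exact ⟨r, hr⟩
  refine ⟨⟨Q, P, hQP, hPQ⟩, fun i j => ?_, fun i j => ?_⟩
  · exact hentry G hstabG i j
  · exact hentry S hstabS i j
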